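/- Let q be a prime power, n ≥ 1, let b_0, …, b_{n-1} ∈ F_{q^n}, let ξ ∈ F_{q^n} be nonzero, define B(x,y) = Tr_{q^n/q}(Σ_{i=0}^{n-1} b_i x y^{q^i}) for x,y ∈ F_{q^n}, define the binary operation x*y = xy + B(x,y)·ξ on F_{q^n}, and set M(X) = ξ·Σ_{i=0}^{n-1} b_i X^{q^i}. Then x*a ≠ 0 for all x, a ∈ F_{q^n} with x ≠ 0 and a ≠ 0 (i.e., * has no zero divisors, so * defines a presemifield multiplication on F_{q^n}) if and only if Tr_{q^n/q}(M(a)/a) ≠ -1 for every a ∈ F_{q^n} with a ≠ 0. -/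

import Mathlib

/-- switching `x*y = xy + B(x,y)·ξ` of the finite field multiplication on
`F_{q^n}` has no zero divisors iff `Tr_{q^n/q}(M(a)/a) ≠ -1` for all nonzero `a`,
where `B(x,y) = Tr_{q^n/q}(Σ_i b_i x y^{q^i})` and `M(X) = ξ·Σ_i b_i X^{q^i}`. -/
theorem stmt_0 (q n : ℕ) (hq : ∃ p k : ℕ, p.Prime ∧ 0 < k ∧ q = p ^ k) (hn : 1 ≤ n)
    (E : Type*) [Field E] [Fintype E] (hE : Fintype.card E = q ^ n)
    (b : ℕ → E) (ξ : E) (hξ : ξ ≠ 0) :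
    (∀ x a : E, x ≠ 0 → a ≠ 0 →
        x * a + (∑ j ∈ Finset.range n,
          (∑ i ∈ Finset.range n, b i * x * a ^ q ^ i) ^ q ^ j) * ξ ≠ 0)
      ↔ ∀ a : E, a ≠ 0 →
        (∑ j ∈ Finset.range n,
          ((ξ * ∑ i ∈ Finset.range n, b i * a ^ q ^ i) / a) ^ q ^ j) ≠ -1 := by
  obtain ⟨p, k, hp, hk, rfl⟩ := hq
  haveI : Fact p.Prime := ⟨hp⟩
  have hpr : p = ringChar E := by
    obtain ⟨m, hm_prime, hm⟩ := FiniteField.card E (ringChar E)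
    have hd : p ∣ ringChar E ^ (m : ℕ) := by
      rw [← hm, hE, ← pow_mul]
      exact dvd_pow_self p (Nat.mul_pos hk hn).ne'
    exact (Nat.prime_dvd_prime_iff_eq hp hm_prime).mp (hp.dvd_of_dvd_pow hd)
  haveI : CharP E p := hpr ▸ ringChar.charP E
  set Q := p ^ k with hQ
  -- basic facts about the Frobenius-type maps z ↦ z ^ Q ^ j
  have hQpos : 0 < Q := pow_pos hp.pos k
  have hneg : ∀ (z : E) (j : ℕ), (-z) ^ Q ^ j = -(z ^ Q ^ j) := by
    intro z j
    have h := add_pow_char_pow (p := p) (R := E) (x := z) (y := -z) (n := k * j)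
    rw [add_neg_cancel, zero_pow (pow_ne_zero _ hp.pos.ne')] at h
    rw [show Q ^ j = p ^ (k * j) by rw [hQ, pow_mul]]
    linear_combination -h
  have hfixq : ∀ c : E, c ^ Q = c → ∀ j, c ^ Q ^ j = c := by
    intro c hc j
    induction j with
    | zero => simp
    | succ j ih => rw [pow_succ, pow_mul, ih, hc]
  have hpowcard : ∀ z : E, z ^ Q ^ n = z := by
    intro z
    rw [show Q ^ n = Fintype.card E from hE.symm]
    exact FiniteField.pow_card z
  have htr_fix : ∀ u : E,
      (∑ j ∈ Finset.range n, u ^ Q ^ j) ^ Q = ∑ j ∈ Finset.range n, u ^ Q ^ j := by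
    intro u
    have hmap : (∑ j ∈ Finset.range n, u ^ Q ^ j) ^ Q
        = ∑ j ∈ Finset.range n, (u ^ Q ^ j) ^ Q := by
      haveI : ExpChar E p := ExpChar.prime hp
      rw [show Q = p ^ k from hQ]
      exact sum_pow_char_pow p k _ _
    have hshift : ∀ j : ℕ, (u ^ Q ^ j) ^ Q = u ^ Q ^ (j + 1) := by
      intro j; rw [← pow_mul, ← pow_succ]
    rw [hmap, Finset.sum_congr rfl fun j _ => hshift j]
    have h1 := Finset.sum_range_succ' (fun j => u ^ Q ^ j) n
    rw [Finset.sum_range_succ, hpowcard u] at h1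
    simp only [pow_zero, pow_one] at h1
    exact (add_right_cancel h1).symm
  have hinner : ∀ x a : E, (∑ i ∈ Finset.range n, b i * x * a ^ Q ^ i)
      = x * ∑ i ∈ Finset.range n, b i * a ^ Q ^ i := by
    intro x a
    rw [Finset.mul_sum]
    exact Finset.sum_congr rfl fun i _ => by ring
  constructor
  · intro H a ha hTr
    refine H (-(ξ / a)) a (neg_ne_zero.mpr (div_ne_zero hξ ha)) ha ?_
    rw [hinner]
    have hw : -(ξ / a) * (∑ i ∈ Finset.range n, b i * a ^ Q ^ i)
        = -((ξ * ∑ i ∈ Finset.range n, b i * a ^ Q ^ i) / a) := by ring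
    rw [hw]
    have hneg_sum : (∑ j ∈ Finset.range n,
          (-((ξ * ∑ i ∈ Finset.range n, b i * a ^ Q ^ i) / a)) ^ Q ^ j)
        = -(∑ j ∈ Finset.range n,
          ((ξ * ∑ i ∈ Finset.range n, b i * a ^ Q ^ i) / a) ^ Q ^ j) := by
      rw [← Finset.sum_neg_distrib]
      exact Finset.sum_congr rfl fun j _ => hneg _ j
    rw [hneg_sum, hTr, neg_neg, one_mul]
    field_simp
    ring
  · intro H x a hx ha hzero
    rw [hinner] at hzero
    obtain ⟨S, hSdef⟩ : ∃ S, (∑ i ∈ Finset.range n, b i * a ^ Q ^ i) = S := ⟨_, rfl⟩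
    rw [hSdef] at hzero
    obtain ⟨t, ht⟩ : ∃ t, (∑ j ∈ Finset.range n, (x * S) ^ Q ^ j) = t := ⟨_, rfl⟩
    rw [ht] at hzero
    have htfix : t ^ Q = t := ht ▸ htr_fix _
    by_cases h0 : t = 0
    · rw [h0, zero_mul, add_zero] at hzero
      exact mul_ne_zero hx ha hzero
    have hxa : x = -(t * ξ) / a := by
      rw [eq_div_iff ha]
      linear_combination hzero
    have hw : x * S = -(t * ((ξ * S) / a)) := by rw [hxa]; ring
    have hteq : t = -(t * ∑ j ∈ Finset.range n, ((ξ * S) / a) ^ Q ^ j) := by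
      conv_lhs => rw [← ht, hw]
      rw [Finset.mul_sum, ← Finset.sum_neg_distrib]
      exact Finset.sum_congr rfl fun j _ => by
        rw [hneg, mul_pow, hfixq t htfix j]
    have hT : (∑ j ∈ Finset.range n, ((ξ * S) / a) ^ Q ^ j) = -1 := by
      have h2 : t * (∑ j ∈ Finset.range n, ((ξ * S) / a) ^ Q ^ j) = t * (-1) := by
        linear_combination hteq
      exact mul_left_cancel₀ h0 h2
    exact H a ha (hSdef ▸ hT)
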